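/- For 1 ≤ ι ≤ n − 1, the number of I-reduced matrices in GL_n(𝔽_q) for I = {ι} whose entries are all 0 or 1 and with at most two nonzero entries per column equals the coefficient of z^ι in the power series expansion of ∏_{i=1}^{n−ι+1} 1/(1 − i z); equivalently it equals the sum over all tuples (t₁,…,t_{n−ι+1}) of nonnegative integers with t₁ + ⋯ + t_{n−ι+1} = ι of 1^{t₁}·2^{t₂}·⋯·(n−ι+1)^{t_{n−ι+1}}. -/

import Mathlib

/-- `A` is an `I`-reduced matrix: `A` is invertible, in each row the leftmost invertible
entry is `1` (the "leading 1", located at column `lead i`), all entries above a leading `1`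
vanish, and within each block of rows determined by `I` the leading `1`s occur in strictly
increasing column positions. -/
def IsIReduced {R : Type*} [CommRing R] (n : ℕ) (I : Finset ℕ)
    (A : Matrix (Fin n) (Fin n) R) : Prop :=
  IsUnit A.det ∧
  ∃ lead : Fin n → Fin n,
    (∀ i, A i (lead i) = 1) ∧
    (∀ i j, j < lead i → ¬ IsUnit (A i j)) ∧
    (∀ i i' : Fin n, i' < i → A i' (lead i) = 0) ∧
    (∀ i i' : Fin n, i < i' → (∀ ι ∈ I, ((i : ℕ) < ι ↔ (i' : ℕ) < ι)) →
      lead i < lead i')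

open Finset

namespace Stmt4Aux

/-- A downward closed set of `Fin N` is an initial segment. -/
lemma downclosed_mem_iff {N : ℕ} {P : Finset (Fin N)}
    (hP : ∀ ⦃k' k : Fin N⦄, k' ≤ k → k ∈ P → k' ∈ P) {k : Fin N} :
    k ∈ P ↔ (k : ℕ) < P.card := by
  constructor
  · intro hk
    have h1 : Finset.Iic k ⊆ P := fun x hx => hP (mem_Iic.mp hx) hk
    have := Finset.card_le_card h1
    rw [Fin.card_Iic] at this; omega
  · intro hk
    by_contra hkP
    have h1 : P ⊆ Finset.Iio k := by
      intro x hx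
      rw [mem_Iio]
      by_contra hxk
      exact hkP (hP (not_lt.mp hxk) hx)
    have := Finset.card_le_card h1
    rw [Fin.card_Iio] at this; omega

lemma card_filter_lt {N : ℕ} (b : Fin N) :
    (univ.filter (fun x : Fin N => x < b)).card = b := by
  rw [show univ.filter (fun x : Fin N => x < b) = Finset.Iio b by ext x; simp, Fin.card_Iio]

lemma card_filter_val_lt {N b : ℕ} (hb : b ≤ N) :
    (univ.filter (fun x : Fin N => (x : ℕ) < b)).card = b := by
  rw [Finset.card_nbij (fun x : Fin N => (x : ℕ)) (t := Finset.range b)]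
  · exact Finset.card_range b
  · intro a ha
    rw [Finset.mem_coe, Finset.mem_filter] at ha
    exact Finset.mem_range.mpr ha.2
  · intro a _ a' _ h; exact Fin.ext h
  · intro x hx
    simp only [coe_range, Set.mem_Iio] at hx
    exact ⟨⟨x, lt_of_lt_of_le hx hb⟩, by simp [hx], rfl⟩

lemma le_apply_of_strictMono {a b : ℕ} {f : Fin a → Fin b} (hf : StrictMono f) (j : Fin a) :
    (j : ℕ) ≤ f j := by
  have h := Finset.card_le_card_of_injOn f
    (fun x hx => by
      simp only [mem_coe, mem_Iio] at hx ⊢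
      exact hf hx)
    (hf.injective.injOn)
    (s := Finset.Iio j) (t := Finset.Iio (f j))
  rwa [Fin.card_Iio, Fin.card_Iio] at h

lemma add_le_apply_of_strictMono {a b : ℕ} {f : Fin a → Fin b} (hf : StrictMono f)
    {j j' : Fin a} (h : j ≤ j') : (f j : ℕ) + ((j' : ℕ) - (j : ℕ)) ≤ f j' := by
  have h2 := Finset.card_le_card_of_injOn f
    (fun x hx => by
      simp only [mem_coe, mem_Ioc] at hx ⊢
      exact ⟨hf hx.1, hf.monotone hx.2⟩)
    (hf.injective.injOn)
    (s := Finset.Ioc j j') (t := Finset.Ioc (f j) (f j'))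
  rw [Fin.card_Ioc, Fin.card_Ioc] at h2
  have h3 := hf.monotone h
  rw [Fin.le_def] at h h3
  omega

end Stmt4Aux
section CountIdentity

open Finset
namespace Stmt4Aux

variable {ι m : ℕ}

/-- cumulative sums of a tuple. -/
def cumul (t : Fin (m+1) → ℕ) (i : Fin (m+1)) : ℕ :=
  ∑ i' ∈ univ.filter (fun i' => i' ≤ i), t i'

/-- strict cumulative sums. -/
def lowcum (t : Fin (m+1) → ℕ) (i : Fin (m+1)) : ℕ :=
  ∑ i' ∈ univ.filter (fun i' => i' < i), t i'

lemma cumul_eq (t : Fin (m+1) → ℕ) (i : Fin (m+1)) : cumul t i = lowcum t i + t i := by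
  rw [cumul, lowcum, show univ.filter (fun i' => i' ≤ i) = insert i (univ.filter (fun i' => i' < i))
    by ext x; simp [le_iff_lt_or_eq, or_comm], Finset.sum_insert (by simp)]
  ring

lemma cumul_mono (t : Fin (m+1) → ℕ) {i i' : Fin (m+1)} (h : i ≤ i') : cumul t i ≤ cumul t i' :=
  Finset.sum_le_sum_of_subset (fun x hx => by
    simp only [mem_filter, mem_univ, true_and] at hx ⊢; exact le_trans hx h)

lemma cumul_le (t : Fin (m+1) → ℕ) (i : Fin (m+1)) : cumul t i ≤ ∑ i', t i' :=
  Finset.sum_le_sum_of_subset (fun x _ => mem_univ x)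

lemma cumul_last (t : Fin (m+1) → ℕ) : cumul t (Fin.last m) = ∑ i', t i' := by
  rw [cumul]; congr 1; ext x; simp [Fin.le_last]

/-- inverse map: the monotone function with fiber sizes `t`. -/
def vOf (t : Fin (m+1) → ℕ) (j : Fin ι) : Fin (m+1) :=
  ⟨min (univ.filter (fun i => cumul t i ≤ (j : ℕ))).card m, by omega⟩

variable {t : Fin (m+1) → ℕ} (ht : ∑ i, t i = ι)

include ht in
lemma vOf_card (j : Fin ι) :
    (univ.filter (fun i => cumul t i ≤ (j : ℕ))).card ≤ m ∧
    ((vOf t j : ℕ) = (univ.filter (fun i => cumul t i ≤ (j : ℕ))).card) := by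
  have hlast : Fin.last m ∉ univ.filter (fun i => cumul t i ≤ (j : ℕ)) := by
    simp only [mem_filter, mem_univ, true_and, not_le, cumul_last, ht]
    exact j.isLt
  have hcard : (univ.filter (fun i => cumul t i ≤ (j : ℕ))).card < m + 1 := by
    calc _ < (univ : Finset (Fin (m+1))).card :=
        Finset.card_lt_card (Finset.ssubset_univ_iff.mpr (by intro h; rw [h] at hlast; exact hlast (mem_univ _)))
      _ = m + 1 := by simp
  exact ⟨by omega, by simp [vOf]; omega⟩

include ht in
lemma lt_vOf_iff (i : Fin (m+1)) (j : Fin ι) :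
    (i : ℕ) < (vOf t j : ℕ) ↔ cumul t i ≤ (j : ℕ) := by
  rw [(vOf_card ht j).2]
  exact (downclosed_mem_iff (P := univ.filter (fun i => cumul t i ≤ (j : ℕ)))
    (fun k' k hk hm => by
      simp only [mem_filter, mem_univ, true_and] at hm ⊢
      exact le_trans (cumul_mono t hk) hm)).symm.trans (by simp)

include ht in
lemma vOf_le_iff (i : Fin (m+1)) (j : Fin ι) :
    (vOf t j : ℕ) ≤ (i : ℕ) ↔ (j : ℕ) < cumul t i := by
  rw [← not_lt, lt_vOf_iff ht, not_le]

include ht in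
lemma vOf_monotone : Monotone (vOf t (ι := ι)) := by
  intro j j' h
  rw [Fin.le_def, (vOf_card ht j).2, (vOf_card ht j').2]
  apply Finset.card_le_card
  intro x hx
  simp only [mem_filter, mem_univ, true_and] at hx ⊢
  exact le_trans hx (Fin.le_def.mp h)

include ht in
lemma card_vOf_le (i : Fin (m+1)) :
    (univ.filter (fun j : Fin ι => vOf t j ≤ i)).card = cumul t i := by
  have : univ.filter (fun j : Fin ι => vOf t j ≤ i)
      = univ.filter (fun j : Fin ι => (j : ℕ) < cumul t i) := by
    ext j; simp only [mem_filter, mem_univ, true_and, Fin.le_def]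
    rw [vOf_le_iff ht]
  rw [this, card_filter_val_lt (le_trans (cumul_le t i) (le_of_eq ht))]

include ht in
lemma card_vOf_lt (i : Fin (m+1)) :
    (univ.filter (fun j : Fin ι => vOf t j < i)).card = lowcum t i := by
  rcases Nat.eq_zero_or_eq_succ_pred (i : ℕ) with h0 | hsucc
  · have hi : i = 0 := Fin.ext h0
    subst hi
    rw [show univ.filter (fun j : Fin ι => vOf t j < 0) = ∅ by
      ext j; simp [Fin.not_lt_zero _], lowcum,
      show univ.filter (fun i' : Fin (m+1) => i' < 0) = ∅ by ext x; simp [Fin.not_lt_zero _]]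
    simp
  · set x := (i : ℕ) - 1 with hx
    have hxlt : x < m + 1 := by have := i.isLt; omega
    set p : Fin (m+1) := ⟨x, hxlt⟩ with hp
    have hival : (i : ℕ) = x + 1 := by omega
    have h1 : univ.filter (fun j : Fin ι => vOf t j < i)
        = univ.filter (fun j : Fin ι => vOf t j ≤ p) := by
      ext j; simp only [mem_filter, mem_univ, true_and, Fin.lt_def, Fin.le_def, hp]
      omega
    have h2 : lowcum t i = cumul t p := by
      rw [lowcum, cumul]; congr 1; ext i'
      simp only [mem_filter, mem_univ, true_and, Fin.lt_def, Fin.le_def, hp]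
      omega
    rw [h1, h2, card_vOf_le ht]

include ht in
lemma card_vOf_fiber (i : Fin (m+1)) :
    (univ.filter (fun j : Fin ι => vOf t j = i)).card = t i := by
  have hsub : univ.filter (fun j : Fin ι => vOf t j < i)
      ⊆ univ.filter (fun j : Fin ι => vOf t j ≤ i) := by
    intro x hx; simp only [mem_filter, mem_univ, true_and] at hx ⊢; exact le_of_lt hx
  have hsd : univ.filter (fun j : Fin ι => vOf t j = i)
      = univ.filter (fun j : Fin ι => vOf t j ≤ i) \ univ.filter (fun j : Fin ι => vOf t j < i) := by
    ext j
    simp only [mem_filter, mem_univ, true_and, mem_sdiff, not_lt]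
    constructor
    · rintro rfl; exact ⟨le_refl _, le_refl _⟩
    · rintro ⟨h1, h2⟩; exact le_antisymm h1 h2
  rw [hsd, Finset.card_sdiff_of_subset hsub, card_vOf_le ht, card_vOf_lt ht, cumul_eq]
  omega

/-- for a monotone `v`, `cumul` of its fiber counts gives the counts of sublevel sets. -/
lemma cumul_fiber_card (v : Fin ι → Fin (m+1)) (i : Fin (m+1)) :
    cumul (fun i' => (univ.filter (fun j : Fin ι => v j = i')).card) i
      = (univ.filter (fun j : Fin ι => v j ≤ i)).card := by
  rw [cumul]
  rw [Finset.card_eq_sum_card_fiberwise (f := v) (t := univ.filter (fun i' => i' ≤ i))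
    (fun x hx => by simp only [mem_coe, mem_filter, mem_univ, true_and] at hx ⊢; exact hx)]
  apply Finset.sum_congr rfl
  intro i' hi'
  simp only [mem_filter, mem_univ, true_and] at hi'
  congr 1
  ext j
  simp only [mem_filter, mem_univ, true_and]
  constructor
  · rintro rfl; exact ⟨le_refl _ |>.trans hi', rfl⟩
  · rintro ⟨_, rfl⟩; rfl

lemma sum_fiber_card (v : Fin ι → Fin (m+1)) :
    ∑ i, (univ.filter (fun j : Fin ι => v j = i)).card = ι := by
  rw [← Finset.card_eq_sum_card_fiberwise (f := v) (t := univ) (fun x _ => mem_univ _)]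
  simp

lemma vOf_fiber_eq (v : Fin ι → Fin (m+1)) (hv : Monotone v) :
    vOf (fun i' => (univ.filter (fun j : Fin ι => v j = i')).card) = v := by
  have ht' : ∑ i, (univ.filter (fun j : Fin ι => v j = i)).card = ι := sum_fiber_card v
  funext j
  have key : ∀ i : Fin (m+1),
      ((vOf (fun i' => (univ.filter (fun j : Fin ι => v j = i')).card) j : Fin (m+1)) ≤ i ↔ v j ≤ i) := by
    intro i
    rw [Fin.le_def, vOf_le_iff ht', cumul_fiber_card]
    rw [← downclosed_mem_iff (P := univ.filter (fun j : Fin ι => v j ≤ i))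
      (fun k' k hk hm => by
        simp only [mem_filter, mem_univ, true_and] at hm ⊢
        exact le_trans (hv hk) hm)]
    simp
  exact le_antisymm ((key (v j)).mpr (le_refl _)) ((key _).mp (le_refl _))

/-- The key counting identity. -/
lemma sum_monotone_eq :
    ∑ v ∈ (univ : Finset {v : Fin ι → Fin (m+1) // Monotone v}), ∏ j, ((v.1 j : ℕ) + 1)
    = ∑ t ∈ Finset.Nat.antidiagonalTuple (m+1) ι, ∏ i : Fin (m+1), ((i : ℕ) + 1) ^ t i := by
  classical
  refine Finset.sum_bij' (i := fun v _ => fun i => (univ.filter (fun j : Fin ι => v.1 j = i)).card)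
    (j := fun t htm => ⟨vOf t, vOf_monotone (Finset.Nat.mem_antidiagonalTuple.mp htm)⟩)
    ?_ (fun t htm => mem_univ _) ?_ ?_ ?_
  · intro v _
    exact Finset.Nat.mem_antidiagonalTuple.mpr (sum_fiber_card v.1)
  · intro v _
    exact Subtype.ext (vOf_fiber_eq v.1 v.2)
  · intro t htm
    funext i
    exact card_vOf_fiber (Finset.Nat.mem_antidiagonalTuple.mp htm) i
  · intro v _
    rw [Finset.prod_comp (fun i : Fin (m+1) => ((i : ℕ) + 1)) v.1]
    rw [Finset.prod_subset (Finset.subset_univ (univ.image v.1))]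
    intro x _ hx
    rw [show (univ.filter (fun a => v.1 a = x)).card = 0 from Finset.card_eq_zero.mpr
      (Finset.filter_eq_empty_iff.mpr (fun {a} _ ha => hx (Finset.mem_image_of_mem v.1 (mem_univ a) |> (ha ▸ ·))))]
    rfl

end Stmt4Aux
end CountIdentity
section Construction
namespace Stmt4Aux
open Finset

variable {ι m : ℕ} {F : Type*} [Field F] [DecidableEq F]

def sF (v : Fin ι → Fin (m+1)) (j : Fin ι) : Fin (ι + m) :=
  ⟨(v j : ℕ) + j, by have := (v j).isLt; have := j.isLt; omega⟩

variable {v : Fin ι → Fin (m+1)}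

lemma sF_strictMono (hv : Monotone v) : StrictMono (sF v) := by
  intro j j' h
  have h2 := hv h.le
  rw [Fin.lt_def] at h ⊢
  rw [Fin.le_def] at h2
  simp only [sF]
  omega

lemma card_S (hv : Monotone v) : (univ.image (sF v)).card = ι := by
  rw [Finset.card_image_of_injective _ (sF_strictMono hv).injective, card_univ, Fintype.card_fin]

lemma card_Sc (hv : Monotone v) : (univ.image (sF v))ᶜ.card = m := by
  rw [Finset.card_compl, card_S hv, Fintype.card_fin]
  omega

def tF (hv : Monotone v) : Fin m ↪o Fin (ι + m) :=
  ((univ.image (sF v))ᶜ).orderEmbOfFin (card_Sc hv)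

lemma tF_mem_compl (hv : Monotone v) (k : Fin m) : tF hv k ∈ (univ.image (sF v))ᶜ :=
  Finset.orderEmbOfFin_mem _ _ _

lemma tF_ne_sF (hv : Monotone v) (k : Fin m) (j : Fin ι) : tF hv k ≠ sF v j := by
  intro h
  have := tF_mem_compl hv k
  rw [Finset.mem_compl, h] at this
  exact this (Finset.mem_image_of_mem _ (mem_univ j))

lemma card_Sc_lt (hv : Monotone v) (j : Fin ι) :
    (((univ.image (sF v))ᶜ).filter (fun x => x < sF v j)).card = (v j : ℕ) := by
  have htot : (univ.filter (fun x : Fin (ι + m) => x < sF v j)).card = (v j : ℕ) + (j : ℕ) :=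
    card_filter_lt (sF v j)
  have hS : ((univ.image (sF v)).filter (fun x => x < sF v j)).card = (j : ℕ) := by
    have himg : (univ.image (sF v)).filter (fun x => x < sF v j)
        = (univ.filter (fun j' : Fin ι => j' < j)).image (sF v) := by
      ext c
      simp only [mem_filter, mem_image, mem_univ, true_and]
      constructor
      · rintro ⟨⟨j', rfl⟩, hlt⟩
        exact ⟨j', (sF_strictMono hv).lt_iff_lt.mp hlt, rfl⟩
      · rintro ⟨j', hj', rfl⟩
        exact ⟨⟨j', rfl⟩, sF_strictMono hv hj'⟩
    rw [himg, Finset.card_image_of_injective _ (sF_strictMono hv).injective, card_filter_lt]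
  have hsplit : (univ.filter (fun x : Fin (ι + m) => x < sF v j)).card
      = ((univ.image (sF v)).filter (fun x => x < sF v j)).card
        + (((univ.image (sF v))ᶜ).filter (fun x => x < sF v j)).card := by
    rw [← Finset.card_union_of_disjoint
      (Finset.disjoint_filter_filter (disjoint_compl_right))]
    congr 1
    ext x
    simp only [mem_union, mem_filter, mem_univ, true_and, mem_compl]
    tauto
  omega

lemma tF_lt_sF (hv : Monotone v) {k : Fin m} {j : Fin ι} :
    tF hv k < sF v j ↔ (k : ℕ) < (v j : ℕ) := by
  have hdc : ∀ ⦃k' k : Fin m⦄, k' ≤ k →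
      k ∈ univ.filter (fun k => tF hv k < sF v j) → k' ∈ univ.filter (fun k => tF hv k < sF v j) := by
    intro k' k hk hkm
    simp only [mem_filter, mem_univ, true_and] at hkm ⊢
    exact lt_of_le_of_lt ((tF hv).monotone hk) hkm
  have hcard : (univ.filter (fun k => tF hv k < sF v j)).card
      = (((univ.image (sF v))ᶜ).filter (fun x => x < sF v j)).card := by
    apply Finset.card_nbij (fun k => tF hv k)
    · intro a ha
      simp only [mem_coe, mem_filter, mem_univ, true_and] at ha
      exact mem_filter.mpr ⟨tF_mem_compl hv a, ha⟩
    · exact ((tF hv).injective.injOn)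
    · intro x hx
      simp only [coe_filter, Set.mem_setOf_eq] at hx
      obtain ⟨hx1, hx2⟩ := hx
      have : x ∈ Set.range (((univ.image (sF v))ᶜ).orderEmbOfFin (card_Sc hv)) := by
        rw [Finset.range_orderEmbOfFin]; exact_mod_cast hx1
      obtain ⟨k, hk⟩ := this
      refine ⟨k, ?_, hk⟩
      simp only [coe_filter, Set.mem_setOf_eq]
      exact ⟨mem_univ k, by rw [show tF hv k = x from hk]; exact hx2⟩
  have := downclosed_mem_iff (P := univ.filter (fun k => tF hv k < sF v j)) hdc (k := k)
  simp only [mem_filter, mem_univ, true_and] at this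
  rw [this, hcard, card_Sc_lt hv]

def leadF (hv : Monotone v) : Fin (ι + m) → Fin (ι + m) := fun r =>
  if h : (r : ℕ) < ι then sF v ⟨r, h⟩ else tF hv ⟨(r : ℕ) - ι, by have := r.isLt; omega⟩

lemma leadF_lt (hv : Monotone v) {r : Fin (ι + m)} (h : (r : ℕ) < ι) :
    leadF hv r = sF v ⟨r, h⟩ := dif_pos h

lemma leadF_ge (hv : Monotone v) {r : Fin (ι + m)} (h : ι ≤ (r : ℕ)) :
    leadF hv r = tF hv ⟨(r : ℕ) - ι, by have := r.isLt; omega⟩ := dif_neg (not_lt.mpr h)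

lemma leadF_injective (hv : Monotone v) : Function.Injective (leadF hv) := by
  intro r r' h
  unfold leadF at h
  split_ifs at h with h1 h2 h2
  · have := (sF_strictMono hv).injective h
    rw [Fin.mk.injEq] at this
    exact Fin.ext this
  · exact absurd h.symm (tF_ne_sF hv _ _)
  · exact absurd h (tF_ne_sF hv _ _)
  · have := (tF hv).injective h
    rw [Fin.mk.injEq] at this
    have hr := r.isLt; have hr' := r'.isLt
    apply Fin.ext; omega

lemma leadF_bijective (hv : Monotone v) : Function.Bijective (leadF hv) :=
  Finite.injective_iff_bijective.mp (leadF_injective hv)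

end Stmt4Aux
end Construction
section MatDef
namespace Stmt4Aux
open Finset

variable {ι m : ℕ} {F : Type*} [Field F] [DecidableEq F]
variable {v : Fin ι → Fin (m+1)}

def matF (hv : Monotone v) (w : ∀ j : Fin ι, Fin ((v j : ℕ) + 1)) :
    Matrix (Fin (ι + m)) (Fin (ι + m)) F := fun r c =>
  if c = leadF hv r ∨ (ι ≤ (r : ℕ) ∧ ∃ j, c = sF v j ∧ (w j : ℕ) = (r : ℕ) - ι + 1) then 1 else 0

variable {hv : Monotone v} {w : ∀ j : Fin ι, Fin ((v j : ℕ) + 1)}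

lemma matF_zero_or_one (r c : Fin (ι + m)) :
    (matF (F := F) hv w) r c = 0 ∨ (matF (F := F) hv w) r c = 1 := by
  unfold matF; split_ifs
  · exact Or.inr rfl
  · exact Or.inl rfl

lemma matF_eq_one_iff {r c : Fin (ι + m)} :
    (matF (F := F) hv w) r c = 1 ↔
      (c = leadF hv r ∨ (ι ≤ (r : ℕ) ∧ ∃ j, c = sF v j ∧ (w j : ℕ) = (r : ℕ) - ι + 1)) := by
  unfold matF; split_ifs with h
  · simp [h]
  · simp [h]

lemma matF_ne_zero_iff {r c : Fin (ι + m)} :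
    (matF (F := F) hv w) r c ≠ 0 ↔
      (c = leadF hv r ∨ (ι ≤ (r : ℕ) ∧ ∃ j, c = sF v j ∧ (w j : ℕ) = (r : ℕ) - ι + 1)) := by
  unfold matF; split_ifs with h
  · simp [h]
  · simp [h]

lemma extra_lead_lt {r : Fin (ι + m)} {j : Fin ι} (hr : ι ≤ (r : ℕ))
    (hw : (w j : ℕ) = (r : ℕ) - ι + 1) : leadF hv r < sF v j := by
  rw [leadF_ge hv hr, tF_lt_sF hv]
  have h1 : (w j : ℕ) ≤ (v j : ℕ) := Nat.lt_succ_iff.mp (w j).isLt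
  simp only []
  omega

lemma matF_eq_zero_of_lt {r c : Fin (ι + m)} (hc : c < leadF hv r) :
    (matF (F := F) hv w) r c = 0 := by
  unfold matF
  rw [if_neg]
  push_neg
  refine ⟨ne_of_lt hc, fun hr j hj hw => ?_⟩
  exfalso
  have := extra_lead_lt (hv := hv) hr hw
  rw [← hj] at this
  exact absurd hc (asymm this)

lemma matF_diag_one (r : Fin (ι + m)) : (matF (F := F) hv w) r (leadF hv r) = 1 := by
  rw [matF_eq_one_iff]; exact Or.inl rfl

lemma matF_above_zero {r r' : Fin (ι + m)} (h : r' < r) :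
    (matF (F := F) hv w) r' (leadF hv r) = 0 := by
  unfold matF
  rw [if_neg]
  push_neg
  constructor
  · exact fun hc => absurd (leadF_injective hv hc) (ne_of_gt h)
  · intro hr' j hj hw
    exfalso
    by_cases hrι : ι ≤ (r : ℕ)
    · rw [leadF_ge hv hrι] at hj
      exact tF_ne_sF hv _ _ hj
    · push_neg at hrι
      rw [leadF_lt hv hrι] at hj
      have := (sF_strictMono hv).injective hj
      have hval : (r : ℕ) = (j : ℕ) := congrArg Fin.val this
      have := r'.isLt
      have h2 := Fin.lt_def.mp h
      have := j.isLt
      omega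

lemma matF_isUnit_det : IsUnit ((matF (F := F) hv w)).det := by
  let σ : Equiv.Perm (Fin (ι + m)) := Equiv.ofBijective _ (leadF_bijective hv)
  have hσ : ∀ r, σ r = leadF hv r := fun _ => rfl
  have hN : ((matF (F := F) hv w).submatrix σ.symm id).det
      = Equiv.Perm.sign σ.symm * (matF (F := F) hv w).det := Matrix.det_permute σ.symm _
  have htri : ((matF (F := F) hv w).submatrix σ.symm id).BlockTriangular id := by
    intro a b hab
    simp only [id] at hab
    have hb : b < leadF hv (σ.symm a) := by
      have : σ (σ.symm a) = a := σ.apply_symm_apply a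
      rw [hσ] at this
      rw [this]
      exact hab
    exact matF_eq_zero_of_lt hb
  have hdiag : ∀ a, ((matF (F := F) hv w).submatrix σ.symm id) a a = 1 := by
    intro a
    have h1 : σ (σ.symm a) = a := σ.apply_symm_apply a
    rw [hσ] at h1
    have h2 := matF_diag_one (F := F) (hv := hv) (w := w) (σ.symm a)
    rw [h1] at h2
    exact h2
  have hdet1 : ((matF (F := F) hv w).submatrix σ.symm id).det = 1 := by
    rw [Matrix.det_of_upperTriangular htri]
    exact Finset.prod_eq_one fun a _ => hdiag a
  rw [hdet1] at hN
  exact IsUnit.of_mul_eq_one _ (by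
    have := hN.symm
    calc (matF (F := F) hv w).det * ((Equiv.Perm.sign σ.symm : ℤ) : F)
        = (Equiv.Perm.sign σ.symm : ℤ) * (matF (F := F) hv w).det := by ring
      _ = 1 := by exact_mod_cast this)

lemma matF_isIReduced : IsIReduced (ι + m) {ι} (matF (F := F) hv w) := by
  refine ⟨matF_isUnit_det, leadF hv, fun r => matF_diag_one r, ?_, fun r r' h => matF_above_zero h, ?_⟩
  · intro r c hc
    rw [matF_eq_zero_of_lt hc]
    exact not_isUnit_zero
  · intro r r' hlt hblk
    have hb := hblk ι (Finset.mem_singleton_self ι)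
    by_cases h : (r : ℕ) < ι
    · have h' : (r' : ℕ) < ι := hb.mp h
      rw [leadF_lt hv h, leadF_lt hv h']
      exact sF_strictMono hv (by rw [Fin.mk_lt_mk]; exact Fin.lt_def.mp hlt)
    · have h' : ¬ (r' : ℕ) < ι := fun hh => h (hb.mpr hh)
      rw [leadF_ge hv (not_lt.mp h), leadF_ge hv (not_lt.mp h')]
      apply (tF hv).strictMono
      rw [Fin.mk_lt_mk]
      have := Fin.lt_def.mp hlt
      omega

lemma matF_col_card (c : Fin (ι + m)) :
    (univ.filter fun r => (matF (F := F) hv w) r c ≠ 0).card ≤ 2 := by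
  classical
  have hsub : (univ.filter fun r => (matF (F := F) hv w) r c ≠ 0)
      ⊆ (univ.filter fun r => c = leadF hv r)
        ∪ (univ.filter fun r => ι ≤ (r : ℕ) ∧ ∃ j, c = sF v j ∧ (w j : ℕ) = (r : ℕ) - ι + 1) := by
    intro r hr
    rw [mem_filter] at hr
    rcases matF_ne_zero_iff.mp hr.2 with h | h
    · exact Finset.mem_union_left _ (mem_filter.mpr ⟨mem_univ _, h⟩)
    · exact Finset.mem_union_right _ (mem_filter.mpr ⟨mem_univ _, h⟩)
  have h1 : (univ.filter fun r : Fin (ι + m) => c = leadF hv r).card ≤ 1 := by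
    apply Finset.card_le_one.mpr
    intro a ha b hb
    rw [mem_filter] at ha hb
    exact leadF_injective hv (ha.2.symm.trans hb.2)
  have h2 : (univ.filter fun r : Fin (ι + m) =>
      ι ≤ (r : ℕ) ∧ ∃ j, c = sF v j ∧ (w j : ℕ) = (r : ℕ) - ι + 1).card ≤ 1 := by
    apply Finset.card_le_one.mpr
    intro a ha b hb
    rw [mem_filter] at ha hb
    obtain ⟨-, ha1, j, hj, hw⟩ := ha
    obtain ⟨-, hb1, j', hj', hw'⟩ := hb
    have hjj : j = j' := (sF_strictMono hv).injective (hj ▸ hj')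
    subst hjj
    apply Fin.ext
    have := a.isLt; have := b.isLt
    omega
  have := (Finset.card_le_card hsub).trans (Finset.card_union_le _ _)
  omega

end Stmt4Aux
end MatDef
section ParamSec
namespace Stmt4Aux
open Finset

variable {ι m : ℕ}

def Param (ι m : ℕ) :=
  Σ v : {v : Fin ι → Fin (m+1) // Monotone v}, ∀ j : Fin ι, Fin ((v.1 j : ℕ) + 1)

noncomputable instance : Fintype (Param ι m) := by unfold Param; infer_instance

variable (F : Type*) [Field F] [DecidableEq F]

def toMat (p : Param ι m) : Matrix (Fin (ι + m)) (Fin (ι + m)) F := matF p.1.2 p.2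

lemma toMat_injective : Function.Injective (toMat F : Param ι m → _) := by
  rintro ⟨⟨v, hv⟩, w⟩ ⟨⟨v', hv'⟩, w'⟩ h
  have hM : (matF (F := F) hv w) = matF hv' w' := h
  have hvv : v = v' := by
    funext j
    have hjlt : (j : ℕ) < ι + m := by have := j.isLt; omega
    have hjι : ((⟨(j : ℕ), hjlt⟩ : Fin (ι + m)) : ℕ) < ι := j.isLt
    have e1 : (matF (F := F) hv w) ⟨(j : ℕ), hjlt⟩ (sF v j) = 1 := by
      rw [matF_eq_one_iff]
      left
      rw [leadF_lt hv hjι]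
    rw [hM] at e1
    rcases matF_eq_one_iff.mp e1 with hl | ⟨hrι, j2, hj2, -⟩
    · rw [leadF_lt hv' hjι] at hl
      rw [show (⟨((⟨(j : ℕ), hjlt⟩ : Fin (ι + m)) : ℕ), hjι⟩ : Fin ι) = j from Fin.ext rfl] at hl
      have h3 := congrArg Fin.val hl
      simp only [sF] at h3
      exact Fin.ext (by omega)
    · exfalso
      have hval : ((⟨(j : ℕ), hjlt⟩ : Fin (ι + m)) : ℕ) = (j : ℕ) := rfl
      have := j.isLt
      omega
  subst hvv
  obtain rfl : hv = hv' := rfl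
  suffices hww : w = w' by rw [hww]
  have key : ∀ (wa wb : ∀ j : Fin ι, Fin ((v j : ℕ) + 1)),
      matF (F := F) hv wa = matF hv wb →
      ∀ (j : Fin ι) (x : ℕ), (wa j : ℕ) = x + 1 → (wb j : ℕ) = x + 1 := by
    intro wa wb hab j x hwx
    have hxv : x < (v j : ℕ) := by have := (wa j).isLt; omega
    have hrlt : ι + x < ι + m := by have := (v j).isLt; omega
    have hrι : ι ≤ ((⟨ι + x, hrlt⟩ : Fin (ι + m)) : ℕ) := by simp
    have e1 : matF (F := F) hv wa ⟨ι + x, hrlt⟩ (sF v j) = 1 := by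
      rw [matF_eq_one_iff]
      right
      refine ⟨hrι, j, rfl, ?_⟩
      have hval : ((⟨ι + x, hrlt⟩ : Fin (ι + m)) : ℕ) = ι + x := rfl
      omega
    rw [hab] at e1
    rcases matF_eq_one_iff.mp e1 with hl | ⟨-, j2, hj2, hw2⟩
    · rw [leadF_ge hv hrι] at hl
      exact absurd hl.symm (tF_ne_sF hv _ _)
    · have hjj : j = j2 := (sF_strictMono hv).injective hj2
      subst hjj
      have hval : ((⟨ι + x, hrlt⟩ : Fin (ι + m)) : ℕ) = ι + x := rfl
      omega
  funext j
  apply Fin.ext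
  have h1 := key w w' hM j
  have h2 := key w' w hM.symm j
  rcases Nat.eq_zero_or_pos (w j : ℕ) with hz | hp
  · rcases Nat.eq_zero_or_pos (w' j : ℕ) with hz' | hp'
    · rw [hz, hz']
    · have := h2 ((w' j : ℕ) - 1) (by omega); omega
  · have := h1 ((w j : ℕ) - 1) (by omega); omega

end Stmt4Aux
end ParamSec
section Surj
namespace Stmt4Aux
open Finset

variable {ι m : ℕ} {F : Type*} [Field F] [DecidableEq F]

lemma toMat_surjective (A : Matrix (Fin (ι + m)) (Fin (ι + m)) F)
    (hred : IsIReduced (ι + m) {ι} A)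
    (h01 : ∀ r c, A r c = 0 ∨ A r c = 1)
    (hcol : ∀ c, (univ.filter fun r => A r c ≠ 0).card ≤ 2) :
    ∃ p : Param ι m, toMat F p = A := by
  obtain ⟨hdet, lead, hl1, hl2, hl3, hl4⟩ := hred
  have one_ne : (1 : F) ≠ 0 := one_ne_zero
  have hzero : ∀ r c, c < lead r → A r c = 0 := by
    intro r c hc
    rcases h01 r c with h | h
    · exact h
    · exact absurd (h ▸ isUnit_one) (hl2 r c hc)
  have hinj : Function.Injective lead := by
    intro i i' h
    by_contra hne
    rcases lt_or_gt_of_ne hne with hlt | hlt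
    · have h2 := hl3 i' i hlt
      rw [← h] at h2
      exact one_ne (by rw [← hl1 i, h2])
    · have h2 := hl3 i i' hlt
      rw [h] at h2
      exact one_ne (by rw [← hl1 i', h2])
  have hbij : Function.Bijective lead := Finite.injective_iff_bijective.mp hinj
  have hblock : ∀ i i' : Fin (ι + m), i < i' → ((i : ℕ) < ι ↔ (i' : ℕ) < ι) →
      lead i < lead i' := by
    intro i i' h hb
    exact hl4 i i' h (by intro κ hκ; rw [Finset.mem_singleton] at hκ; subst hκ; exact hb)
  have hι_le : ∀ j : Fin ι, (j : ℕ) < ι + m := fun j => by have := j.isLt; omega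
  set e1 : Fin ι → Fin (ι + m) := fun j => lead ⟨j, hι_le j⟩ with he1
  have he1s : StrictMono e1 := by
    intro j j' h
    apply hblock _ _ (by rw [Fin.mk_lt_mk]; exact h)
    exact ⟨fun _ => j'.isLt, fun _ => j.isLt⟩
  set e2 : Fin m → Fin (ι + m) := fun k => lead ⟨ι + k, by have := k.isLt; omega⟩ with he2
  have he2s : StrictMono e2 := by
    intro k k' h
    apply hblock _ _ (by rw [Fin.mk_lt_mk]; have := Fin.lt_def.mp h; omega)
    constructor <;> intro hh <;> simp only [Fin.val_mk] at hh ⊢ <;> omega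
  have hlow : ∀ j : Fin ι, (j : ℕ) ≤ (e1 j : ℕ) := fun j => le_apply_of_strictMono he1s j
  have hupp : ∀ j : Fin ι, (e1 j : ℕ) ≤ m + (j : ℕ) := by
    intro j
    have hι1 : 0 < ι := j.pos
    have hlast : (ι - 1 : ℕ) < ι := by omega
    have hgap := add_le_apply_of_strictMono he1s (j := j) (j' := ⟨ι - 1, hlast⟩)
      (by rw [Fin.le_def]; have := j.isLt; simp only [Fin.val_mk]; omega)
    have h2 := (e1 ⟨ι - 1, hlast⟩).isLt
    have hc : ((⟨ι - 1, hlast⟩ : Fin ι) : ℕ) = ι - 1 := rfl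
    rw [hc] at hgap
    have := j.isLt
    omega
  set v : Fin ι → Fin (m+1) := fun j => ⟨(e1 j : ℕ) - (j : ℕ), by have := hupp j; omega⟩
    with hvdef
  have hv : Monotone v := by
    intro j j' h
    rw [Fin.le_def]
    have hgap := add_le_apply_of_strictMono he1s h
    have := hlow j
    rw [Fin.le_def] at h
    simp only [hvdef]
    omega
  have hsv : ∀ j, sF v j = e1 j := by
    intro j
    apply Fin.ext
    simp only [sF, hvdef]
    have := hlow j
    omega
  have he2c : ∀ k, e2 k ∈ (univ.image (sF v))ᶜ := by
    intro k
    rw [Finset.mem_compl]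
    intro hk
    obtain ⟨j, -, hj⟩ := Finset.mem_image.mp hk
    rw [hsv] at hj
    have h2 := congrArg Fin.val (hinj hj)
    simp only [Fin.val_mk] at h2
    have := j.isLt
    omega
  have htf : ∀ k, tF hv k = e2 k := by
    have hu := Finset.orderEmbOfFin_unique (card_Sc hv) (f := e2) he2c he2s
    intro k
    rw [show tF hv k = ((univ.image (sF v))ᶜ).orderEmbOfFin (card_Sc hv) k from rfl, ← hu]
  have hlead : ∀ r, leadF hv r = lead r := by
    intro r
    by_cases h : (r : ℕ) < ι
    · rw [leadF_lt hv h, hsv]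
    · push_neg at h
      rw [leadF_ge hv h, htf]
      apply congrArg lead
      apply Fin.ext
      simp only [Fin.val_mk]
      omega
  have hch : ∀ j : Fin ι, ∃ x : Fin ((v j : ℕ) + 1),
      ∀ r : Fin (ι + m), ι ≤ (r : ℕ) → (A r (sF v j) ≠ 0 ↔ (x : ℕ) = (r : ℕ) - ι + 1) := by
    intro j
    by_cases hex : ∃ r : Fin (ι + m), ι ≤ (r : ℕ) ∧ A r (sF v j) ≠ 0
    · obtain ⟨r₀, hr₀ι, hr₀⟩ := hex
      have hne : lead r₀ ≠ sF v j := by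
        rw [hsv]
        intro hq
        have h2 := congrArg Fin.val (hinj hq)
        simp only [Fin.val_mk] at h2
        have := j.isLt
        omega
      have hlt : lead r₀ < sF v j := by
        rcases lt_or_gt_of_ne hne with h | h
        · exact h
        · exact absurd (hzero _ _ h) hr₀
      have hr0v : ((r₀ : ℕ) - ι) < (v j : ℕ) := by
        have h2 : leadF hv r₀ < sF v j := by rw [hlead]; exact hlt
        rw [leadF_ge hv hr₀ι] at h2
        have h3 := (tF_lt_sF hv).mp h2
        simp only [Fin.val_mk] at h3
        exact h3
      refine ⟨⟨(r₀ : ℕ) - ι + 1, by omega⟩, ?_⟩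
      intro r hrι
      constructor
      · intro hA
        have hr : r = r₀ := by
          by_contra hrr
          have hjr : (⟨(j : ℕ), hι_le j⟩ : Fin (ι + m)) ≠ r := by
            intro hq
            have hq2 := congrArg Fin.val hq
            simp only [Fin.val_mk] at hq2
            have := j.isLt
            omega
          have hjr0 : (⟨(j : ℕ), hι_le j⟩ : Fin (ι + m)) ≠ r₀ := by
            intro hq
            have hq2 := congrArg Fin.val hq
            simp only [Fin.val_mk] at hq2
            have := j.isLt
            omega
          have hAj : A ⟨(j : ℕ), hι_le j⟩ (sF v j) ≠ 0 := by
            rw [hsv]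
            rw [show e1 j = lead ⟨(j : ℕ), hι_le j⟩ from rfl, hl1]
            exact one_ne
          have hsubset : ({⟨(j : ℕ), hι_le j⟩, r, r₀} : Finset (Fin (ι + m)))
              ⊆ univ.filter (fun r' => A r' (sF v j) ≠ 0) := by
            intro x hx
            simp only [Finset.mem_insert, Finset.mem_singleton] at hx
            rcases hx with rfl | rfl | rfl <;> exact mem_filter.mpr ⟨mem_univ _, by assumption⟩
          have hc3 : ({⟨(j : ℕ), hι_le j⟩, r, r₀} : Finset (Fin (ι + m))).card = 3 := by
            rw [Finset.card_insert_of_notMem (by simp [hjr, hjr0]),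
              Finset.card_insert_of_notMem (by simp [hrr]), Finset.card_singleton]
          have := (Finset.card_le_card hsubset).trans (hcol (sF v j))
          omega
        subst hr
        rfl
      · intro hx
        have hr : r = r₀ := by
          apply Fin.ext
          simp only [Fin.val_mk] at hx
          omega
        rw [hr]
        exact hr₀
    · push_neg at hex
      refine ⟨⟨0, by omega⟩, ?_⟩
      intro r hrι
      constructor
      · intro hA
        exact absurd (hex r hrι) hA
      · intro h0
        simp only [Fin.val_mk] at h0
        omega
  choose w hw using hch
  refine ⟨⟨⟨v, hv⟩, w⟩, ?_⟩
  show matF hv w = A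
  funext r c
  by_cases hcond : c = leadF hv r ∨ (ι ≤ (r : ℕ) ∧ ∃ j, c = sF v j ∧ (w j : ℕ) = (r : ℕ) - ι + 1)
  · rw [show matF (F := F) hv w r c = 1 from matF_eq_one_iff.mpr hcond]
    rcases hcond with hc | ⟨hrι, j, rfl, hwj⟩
    · rw [hc, hlead]
      exact (hl1 r).symm
    · have hA := (hw j r hrι).mpr hwj
      rcases h01 r (sF v j) with h | h
      · exact absurd h hA
      · exact h.symm
  · rw [show matF (F := F) hv w r c = 0 from by unfold matF; rw [if_neg hcond]]
    by_contra hA0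
    have hA0' : A r c ≠ 0 := fun hq => hA0 hq.symm
    push_neg at hcond
    obtain ⟨hc1, hc2⟩ := hcond
    rw [hlead] at hc1
    have hclead : lead r < c := by
      rcases lt_trichotomy c (lead r) with h | h | h
      · exact absurd (hzero r c h) hA0'
      · exact absurd h hc1
      · exact h
    obtain ⟨i', hi'⟩ := hbij.surjective c
    have hri' : i' < r := by
      rcases lt_trichotomy r i' with h | h | h
      · exact absurd (hi' ▸ hl3 i' r h) hA0'
      · exact absurd (h ▸ hi').symm hc1
      · exact h
    by_cases hiι : (i' : ℕ) < ι
    · have hrι : ι ≤ (r : ℕ) := by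
        by_contra hq
        push_neg at hq
        have hlt2 := hblock i' r hri' ⟨fun _ => hq, fun _ => hiι⟩
        rw [hi'] at hlt2
        exact absurd hclead (asymm hlt2)
      have hcs : c = sF v ⟨(i' : ℕ), hiι⟩ := by
        rw [hsv, ← hi']
      have hwr := (hw ⟨(i' : ℕ), hiι⟩ r hrι).mp (hcs ▸ hA0')
      exact hc2 hrι ⟨(i' : ℕ), hiι⟩ hcs hwr
    · push_neg at hiι
      have hlt2 := hblock i' r hri' ⟨fun hh => absurd hh (not_lt.mpr hiι),
        fun hh => absurd hh (not_lt.mpr (le_trans hiι (le_of_lt (Fin.lt_def.mp hri'))))⟩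
      rw [hi'] at hlt2
      exact absurd hclead (asymm hlt2)

end Stmt4Aux
end Surj
section Final
namespace Stmt4Aux
open Finset

variable {ι m : ℕ} (F : Type*) [Field F] [DecidableEq F]

lemma key_card :
    Nat.card {A : Matrix (Fin (ι + m)) (Fin (ι + m)) F //
        IsIReduced (ι + m) {ι} A ∧ (∀ i j, A i j = 0 ∨ A i j = 1) ∧
        ∀ j, (Finset.univ.filter fun i => A i j ≠ 0).card ≤ 2}
      = Fintype.card (Param ι m) := by
  rw [← Nat.card_eq_fintype_card]
  symm
  apply Nat.card_eq_of_bijective (fun p : Param ι m =>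
    ⟨toMat F p, matF_isIReduced, fun r c => matF_zero_or_one r c, fun c => matF_col_card c⟩)
  constructor
  · intro p p' h
    exact toMat_injective F (congrArg Subtype.val h)
  · rintro ⟨A, hred, h01, hcol⟩
    obtain ⟨p, hp⟩ := toMat_surjective A hred h01 hcol
    exact ⟨p, Subtype.ext hp⟩

lemma card_param :
    Fintype.card (Param ι m) = ∑ t ∈ Finset.Nat.antidiagonalTuple (m+1) ι,
      ∏ i : Fin (m+1), ((i : ℕ) + 1) ^ t i := by
  rw [← sum_monotone_eq]
  rw [show Fintype.card (Param ι m)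
      = ∑ v : {v : Fin ι → Fin (m+1) // Monotone v}, Fintype.card (∀ j : Fin ι, Fin ((v.1 j : ℕ) + 1))
    from Fintype.card_sigma]
  refine Finset.sum_congr rfl (fun v _ => ?_)
  rw [Fintype.card_pi]
  refine Finset.prod_congr rfl (fun j _ => ?_)
  rw [Fintype.card_fin]

end Stmt4Aux
end Final


/-- For `1 ≤ ι ≤ n − 1` and `I = {ι}`, the number of `I`-reduced matrices in `GL_n(𝔽_q)`
whose entries are all `0` or `1` and with at most two nonzero entries per column equals
the coefficient of `z^ι` in `∏_{i=1}^{n−ι+1} 1/(1 − i z)`, i.e. the sum over all tuples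
`(t₁,…,t_{n−ι+1})` of nonnegative integers with `t₁ + ⋯ + t_{n−ι+1} = ι` of
`1^{t₁}·2^{t₂}·⋯·(n−ι+1)^{t_{n−ι+1}}`. -/
theorem stmt_4 (F : Type*) [Field F] [Fintype F] [DecidableEq F] (q n ι : ℕ)
    (hq : Fintype.card F = q) (hn : 2 ≤ n) (h1 : 1 ≤ ι) (h2 : ι ≤ n - 1) :
    Nat.card {A : Matrix (Fin n) (Fin n) F //
        IsIReduced n {ι} A ∧ (∀ i j, A i j = 0 ∨ A i j = 1) ∧
        ∀ j, (Finset.univ.filter fun i => A i j ≠ 0).card ≤ 2}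
      = ∑ t ∈ Finset.Nat.antidiagonalTuple (n - ι + 1) ι,
          ∏ i : Fin (n - ι + 1), ((i : ℕ) + 1) ^ t i := by
  obtain ⟨m, rfl⟩ : ∃ m, n = ι + m := ⟨n - ι, by omega⟩
  have hrw : ι + m - ι + 1 = m + 1 := by omega
  rw [hrw]
  rw [Stmt4Aux.key_card F, Stmt4Aux.card_param]
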